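/- Suppose h ∈ H satisfies h·a = ε(a)·h for every a ∈ H. Then Δ(h)·(a ⊗ 1) = Δ(h)·(1 ⊗ S(a)) for every a ∈ H. -/

import Mathlib

open scoped TensorProduct

/-- The Hopf-algebra computation motivating the paper's Definition 4.1: if `h·a = ε(a)·h`
for all `a`, then `Δ(h)(a ⊗ 1) = Δ(h)(1 ⊗ S(a))`. -/
theorem stmt17 {R H : Type*} [CommRing R] [Ring H] [HopfAlgebra R H]
    (h : H) (hh : ∀ a : H, h * a = (Coalgebra.counit (R := R) a) • h) :
    ∀ a : H,
      Coalgebra.comul (R := R) h * (a ⊗ₜ[R] (1 : H)) =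
      Coalgebra.comul (R := R) h * ((1 : H) ⊗ₜ[R] (HopfAlgebra.antipode (R := R) a)) := by
  intro a
  set S : H →ₗ[R] H := HopfAlgebra.antipode (R := R) with hS
  set Δ : H →ₗ[R] H ⊗[R] H := Coalgebra.comul (R := R) with hΔ
  set ε : H →ₗ[R] R := Coalgebra.counit (R := R) with hε
  -- Q (u ⊗ v) = u * S v
  set Q : H ⊗[R] H →ₗ[R] H := LinearMap.mul' R H ∘ₗ S.lTensor H with hQ
  -- N z = Δh * (1 ⊗ S z)
  set N : H →ₗ[R] H ⊗[R] H :=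
    LinearMap.mulLeft R (Δ h) ∘ₗ (TensorProduct.mk R H H 1) ∘ₗ S with hN
  -- F (x ⊗ y) = Δh * (Δ x * (1 ⊗ S y))
  set F : H ⊗[R] H →ₗ[R] H ⊗[R] H :=
    LinearMap.mulLeft R (Δ h) ∘ₗ Q.lTensor H ∘ₗ
      (TensorProduct.assoc R H H H).toLinearMap ∘ₗ Δ.rTensor H with hF
  -- auxiliary: the inner part of F on pure tensors
  have key1 : ∀ (z : H ⊗[R] H) (y : H),
      Q.lTensor H ((TensorProduct.assoc R H H H) (z ⊗ₜ[R] y)) = z * (1 ⊗ₜ[R] S y) := by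
    intro z y
    induction z using TensorProduct.induction_on with
    | zero => simp
    | tmul u v =>
        simp [hQ, Algebra.TensorProduct.tmul_mul_tmul]
    | add z₁ z₂ h1 h2 =>
        simp only [TensorProduct.add_tmul, map_add, h1, h2, add_mul]
  -- F agrees with N ∘ lid ∘ (ε ⊗ id)
  have key2 : ∀ z : H ⊗[R] H,
      F z = N ((TensorProduct.lid R H) (ε.rTensor H z)) := by
    intro z
    induction z using TensorProduct.induction_on with
    | zero => simp
    | tmul x y =>
        have h2 : Δ h * Δ x = ε x • Δ h := by
          rw [← Bialgebra.comul_mul, hh x, map_smul]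
        have hL : F (x ⊗ₜ[R] y) = Δ h * (Δ x * ((1 : H) ⊗ₜ[R] S y)) := by
          simp only [hF, LinearMap.comp_apply, LinearMap.rTensor_tmul,
            LinearEquiv.coe_coe, key1, LinearMap.mulLeft_apply]
        rw [hL, ← mul_assoc, h2, smul_mul_assoc]
        simp [hN, TensorProduct.mk_apply, mul_smul_comm]
    | add z₁ z₂ h1 h2 => simp [h1, h2]
  -- Evaluate F at Δ a, way 1: coassociativity + antipode axiom
  have hB : F (Δ a) = Δ h * (a ⊗ₜ[R] (1 : H)) := by
    have hco : (TensorProduct.assoc R H H H) (Δ.rTensor H (Δ a)) = Δ.lTensor H (Δ a) :=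
      Coalgebra.coassoc_apply a
    have hQΔ : Q ∘ₗ Δ = Algebra.linearMap R H ∘ₗ ε := by
      rw [hQ, LinearMap.comp_assoc]
      exact HopfAlgebra.mul_antipode_lTensor_comul
    calc F (Δ a) = Δ h * (Q.lTensor H (Δ.lTensor H (Δ a))) := by
          simp only [hF, LinearMap.comp_apply, LinearEquiv.coe_coe, LinearMap.mulLeft_apply]
          rw [hco]
      _ = Δ h * ((Q ∘ₗ Δ).lTensor H (Δ a)) := by rw [← LinearMap.lTensor_comp_apply]
      _ = Δ h * ((Algebra.linearMap R H).lTensor H (ε.lTensor H (Δ a))) := by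
          rw [hQΔ, LinearMap.lTensor_comp_apply]
      _ = Δ h * (a ⊗ₜ[R] (1 : H)) := by
          rw [hε, hΔ, Coalgebra.lTensor_counit_comul]
          simp
  -- Evaluate F at Δ a, way 2: hypothesis + counit axiom
  have hA : F (Δ a) = Δ h * ((1 : H) ⊗ₜ[R] S a) := by
    rw [key2, hε, hΔ, Coalgebra.rTensor_counit_comul]
    simp [hN]
    rfl
  exact hB.symm.trans hA
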